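/- arXiv:1805.04544 — 4 statements merged into one kernel-verified Lean document; each statement's English description precedes it below -/
import Mathlib

section
/- Let G be a weighted finite graph with a unique maximum weight spanning forest F, and let U be a set of vertices that induces a subtree T of F. Then the induced subgraph G[U] has a unique maximum weight spanning tree, and it equals T. -/
/-- Total weight of (the edges of) a graph. -/
noncomputable def wt {V : Type*} (w : Sym2 V → ℝ) (F : SimpleGraph V) : ℝ :=
  ∑ᶠ e ∈ F.edgeSet, w e

/-- Total weight of a graph on a subtype, weights taken from the ambient weight function. -/
noncomputable def wtS {V : Type*} {s : Set V} (w : Sym2 V → ℝ) (F : SimpleGraph s) : ℝ :=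
  ∑ᶠ e ∈ F.edgeSet, w (Sym2.map Subtype.val e)

namespace Stmt4Aux

open SimpleGraph

variable {V : Type*} {F : SimpleGraph V} {U : Set V}

/-- The part of `F` outside `U` (edges not having both endpoints in `U`). -/
def Fout (F : SimpleGraph V) (U : Set V) : SimpleGraph V where
  Adj a b := F.Adj a b ∧ ¬(a ∈ U ∧ b ∈ U)
  symm := ⟨fun a b ⟨h1, h2⟩ => ⟨h1.symm, fun ⟨hb, ha⟩ => h2 ⟨ha, hb⟩⟩⟩
  loopless := ⟨fun a ⟨h1, _⟩ => F.irrefl h1⟩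

/-- `F` with its inside-`U` part replaced by `F'`. -/
def Patch (F : SimpleGraph V) (U : Set V) (F' : SimpleGraph U) : SimpleGraph V where
  Adj a b := (F.Adj a b ∧ ¬(a ∈ U ∧ b ∈ U)) ∨
    ∃ (ha : a ∈ U) (hb : b ∈ U), F'.Adj ⟨a, ha⟩ ⟨b, hb⟩
  symm := by
    constructor
    rintro a b (⟨h1, h2⟩ | ⟨ha, hb, h⟩)
    · exact Or.inl ⟨h1.symm, fun ⟨hb, ha⟩ => h2 ⟨ha, hb⟩⟩
    · exact Or.inr ⟨hb, ha, h.symm⟩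
  loopless := by
    constructor
    rintro a (⟨h1, _⟩ | ⟨ha, hb, h⟩)
    · exact F.irrefl h1
    · exact F'.irrefl h

lemma fout_le : Fout F U ≤ F := fun _ _ h => h.1

/-- Hom from the induced subgraph into `F`. -/
def inclHom (F : SimpleGraph V) (U : Set V) : F.induce U →g F where
  toFun := Subtype.val
  map_rel' := fun h => by simpa using h

lemma mem_of_mem_map_val {s : Set (Sym2 U)} {e : Sym2 V}
    (he : e ∈ Sym2.map (Subtype.val : U → V) '' s) : ∀ v ∈ e, v ∈ U := by
  obtain ⟨e0, _, rfl⟩ := he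
  intro v hv
  obtain ⟨u, _, rfl⟩ := Sym2.mem_map.mp hv
  exact u.2

lemma fout_edge_not_bothU {e : Sym2 V} (he : e ∈ (Fout F U).edgeSet) :
    ¬ ∀ v ∈ e, v ∈ U := by
  induction e using Sym2.ind with
  | _ a b =>
    intro hall
    exact he.2 ⟨hall a (by simp), hall b (by simp)⟩

/-- Key lemma: if `F` is acyclic and `F.induce U` is connected, then two vertices of `U`
reachable through the "outside" part of `F` must be equal. -/
lemma lemA (hFac : F.IsAcyclic) (hU : (F.induce U).Connected)
    {x y : V} (hx : x ∈ U) (hy : y ∈ U) (h : (Fout F U).Reachable x y) : x = y := by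
  classical
  by_contra hxy
  obtain ⟨q⟩ := h
  obtain ⟨t⟩ := hU.preconnected ⟨x, hx⟩ ⟨y, hy⟩
  -- map the outside walk into F
  let f1 : Fout F U →g F := ⟨id, fun h => h.1⟩
  let p1 : F.Walk x y := (q.map f1).bypass
  have hp1 : ∀ e ∈ p1.edges, ¬ ∀ v ∈ e, v ∈ U := by
    intro e he
    have he' : e ∈ (q.map f1).edges := (q.map f1).edges_bypass_subset he
    rw [SimpleGraph.Walk.edges_map] at he'
    obtain ⟨e0, he0, rfl⟩ := List.mem_map.mp he'
    have : e0 ∈ (Fout F U).edgeSet := q.edges_subset_edgeSet he0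
    have h' := fout_edge_not_bothU this
    simp at h' ⊢
    exact h'
  -- map the inside walk into F
  let p2 : F.Walk x y := (t.map (inclHom F U)).bypass
  have hp2 : ∀ e ∈ p2.edges, ∀ v ∈ e, v ∈ U := by
    intro e he
    have he' : e ∈ (t.map (inclHom F U)).edges :=
      (t.map (inclHom F U)).edges_bypass_subset he
    rw [SimpleGraph.Walk.edges_map] at he'
    obtain ⟨e0, _, rfl⟩ := List.mem_map.mp he'
    intro v hv
    obtain ⟨u, _, rfl⟩ := Sym2.mem_map.mp hv
    exact u.2
  have huniq := SimpleGraph.isAcyclic_iff_path_unique.mp hFac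
    ⟨p1, (q.map f1).bypass_isPath⟩ ⟨p2, (t.map (inclHom F U)).bypass_isPath⟩
  have hpeq : p1 = p2 := congrArg Subtype.val huniq
  have hnil : ¬ p1.Nil := SimpleGraph.Walk.not_nil_of_ne hxy
  have hedges : p1.edges = [] := by
    rw [List.eq_nil_iff_forall_not_mem]
    intro e he
    exact hp1 e he (hp2 e (hpeq ▸ he))
  have : p1.length = 0 := by
    have := SimpleGraph.Walk.length_edges p1
    rw [hedges] at this; simpa using this.symm
  exact hnil (SimpleGraph.Walk.nil_iff_length_eq.mpr this)

/-- Transfer reachability when the deleted edge is "outside". -/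
lemma reach_transfer_out (hU : (F.induce U).Connected) {a b : V}
    (he : ¬(a ∈ U ∧ b ∈ U)) {F' : SimpleGraph U} {x y : V}
    (h : (Patch F U F' \ fromEdgeSet {s(a, b)}).Reachable x y) :
    (F \ fromEdgeSet {s(a, b)}).Reachable x y := by
  have hT : ∀ (c d : U), Relation.ReflTransGen (F \ fromEdgeSet {s(a, b)}).Adj ↑c ↑d := by
    intro c d
    have hw := hU.preconnected c d
    rw [SimpleGraph.reachable_iff_reflTransGen] at hw
    induction hw with
    | refl => exact Relation.ReflTransGen.refl
    | tail _ hadj ih =>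
      refine ih.tail ?_
      rename_i p q _
      have hF : F.Adj ↑p ↑q := by simpa using hadj
      refine ⟨hF, ?_⟩
      rw [SimpleGraph.fromEdgeSet_adj]
      rintro ⟨heq, -⟩
      simp only [Set.mem_singleton_iff] at heq
      rcases Sym2.eq_iff.mp heq with ⟨h1, h2⟩ | ⟨h1, h2⟩
      · exact he ⟨h1 ▸ p.2, h2 ▸ q.2⟩
      · exact he ⟨h2 ▸ q.2, h1 ▸ p.2⟩
  rw [SimpleGraph.reachable_iff_reflTransGen] at h ⊢
  induction h with
  | refl => exact Relation.ReflTransGen.refl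
  | tail _ hadj ih =>
    rename_i c d _
    obtain ⟨hp, hnd⟩ := SimpleGraph.sdiff_adj _ _ _ _ |>.mp hadj
    rcases hp with ⟨hF, _⟩ | ⟨hc, hd, _⟩
    · exact ih.tail ⟨hF, hnd⟩
    · exact ih.trans (hT ⟨c, hc⟩ ⟨d, hd⟩)

/-- Transfer reachability when the deleted edge is "inside". -/
lemma reach_transfer_in (hFac : F.IsAcyclic) (hU : (F.induce U).Connected)
    {F' : SimpleGraph U} {a' b' : U} {x y : V} (hx : x ∈ U) (hy : y ∈ U)
    (h : (Patch F U F' \ fromEdgeSet {s((a' : V), (b' : V))}).Reachable x y) :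
    (F' \ fromEdgeSet {s(a', b')}).Reachable ⟨x, hx⟩ ⟨y, hy⟩ := by
  rw [SimpleGraph.reachable_iff_reflTransGen] at h
  have key : ∀ z, Relation.ReflTransGen
      (Patch F U F' \ fromEdgeSet {s((a' : V), (b' : V))}).Adj z y →
      ∃ (u : V) (hu : u ∈ U), (Fout F U).Reachable z u ∧
        (F' \ fromEdgeSet {s(a', b')}).Reachable ⟨u, hu⟩ ⟨y, hy⟩ := by
    intro z hz
    induction hz using Relation.ReflTransGen.head_induction_on with
    | refl => exact ⟨y, hy, Reachable.refl y, Reachable.refl _⟩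
    | head hadj _ ih =>
      obtain ⟨u, hu, h1, h2⟩ := ih
      rename_i z c _
      obtain ⟨hp, hnd⟩ := SimpleGraph.sdiff_adj _ _ _ _ |>.mp hadj
      rcases hp with ⟨hF, hnb⟩ | ⟨hz', hc', hadj'⟩
      · exact ⟨u, hu, (show (Fout F U).Adj z c from ⟨hF, hnb⟩).reachable.trans h1, h2⟩
      · have hcu : c = u := lemA hFac hU hc' hu h1
        have h2' : (F' \ fromEdgeSet {s(a', b')}).Reachable ⟨c, hc'⟩ ⟨y, hy⟩ := by
          subst hcu; exact h2
        refine ⟨z, hz', Reachable.refl z, SimpleGraph.Reachable.trans ?_ h2'⟩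
        refine SimpleGraph.Adj.reachable ?_
        rw [SimpleGraph.sdiff_adj]
        refine ⟨hadj', ?_⟩
        rw [SimpleGraph.fromEdgeSet_adj]
        rintro ⟨heq, -⟩
        simp only [Set.mem_singleton_iff] at heq
        apply hnd
        rw [SimpleGraph.fromEdgeSet_adj]
        refine ⟨?_, fun hzc => hadj'.ne (Subtype.ext hzc)⟩
        have := congrArg (Sym2.map (Subtype.val : U → V)) heq
        simpa using this
  obtain ⟨u, hu, h1, h2⟩ := key x h
  have : x = u := lemA hFac hU hx hu h1
  subst this
  exact h2

lemma patch_le {G : SimpleGraph V} (hFG : F ≤ G) {F' : SimpleGraph U}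
    (hle : F' ≤ G.induce U) : Patch F U F' ≤ G := by
  rintro a b (⟨h, -⟩ | ⟨ha, hb, h⟩)
  · exact hFG h
  · simpa using hle h

lemma patch_acyclic (hFac : F.IsAcyclic) (hU : (F.induce U).Connected)
    {F' : SimpleGraph U} (hF'ac : F'.IsAcyclic) : (Patch F U F').IsAcyclic := by
  rw [SimpleGraph.isAcyclic_iff_forall_adj_isBridge]
  intro v w hvw
  rw [SimpleGraph.isBridge_iff]
  intro hreach
  rcases hvw with ⟨hF, hnb⟩ | ⟨hv, hw, hadj⟩
  · have hb := SimpleGraph.isAcyclic_iff_forall_adj_isBridge.mp hFac hF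
    rw [SimpleGraph.isBridge_iff] at hb
    exact hb (reach_transfer_out hU hnb hreach)
  · have hb := SimpleGraph.isAcyclic_iff_forall_adj_isBridge.mp hF'ac hadj
    rw [SimpleGraph.isBridge_iff] at hb
    exact hb (reach_transfer_in (a' := ⟨v, hv⟩) (b' := ⟨w, hw⟩) hFac hU hv hw hreach)

lemma patch_self : Patch F U (F.induce U) = F := by
  ext a b
  constructor
  · rintro (⟨h, -⟩ | ⟨ha, hb, h⟩)
    · exact h
    · simpa using h
  · intro h
    by_cases hb : a ∈ U ∧ b ∈ U
    · exact Or.inr ⟨hb.1, hb.2, by simpa using h⟩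
    · exact Or.inl ⟨h, hb⟩

lemma edgeSet_patch {F' : SimpleGraph U} :
    (Patch F U F').edgeSet =
      (Fout F U).edgeSet ∪ (Sym2.map (Subtype.val : U → V) '' F'.edgeSet) := by
  ext e
  induction e using Sym2.ind with
  | _ a b =>
    simp only [SimpleGraph.mem_edgeSet, Set.mem_union]
    constructor
    · rintro (h | ⟨ha, hb, h⟩)
      · exact Or.inl h
      · exact Or.inr ⟨s(⟨a, ha⟩, ⟨b, hb⟩), h, rfl⟩
    · rintro (h | ⟨e0, he0, hmap⟩)
      · exact Or.inl h
      · right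
        induction e0 using Sym2.ind with
        | _ p q =>
          simp only [Sym2.map_pair_eq] at hmap
          rcases Sym2.eq_iff.mp hmap with ⟨h1, h2⟩ | ⟨h1, h2⟩
          · subst h1; subst h2; exact ⟨p.2, q.2, by simpa using he0⟩
          · subst h1; subst h2
            exact ⟨q.2, p.2, SimpleGraph.Adj.symm (by simpa using he0)⟩

lemma disj_out_in {s : Set (Sym2 U)} :
    Disjoint (Fout F U).edgeSet (Sym2.map (Subtype.val : U → V) '' s) := by
  rw [Set.disjoint_left]
  intro e he hi
  exact fout_edge_not_bothU he (mem_of_mem_map_val hi)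

lemma wtS_eq (w : Sym2 V → ℝ) (H : SimpleGraph U) :
    wtS w H = ∑ᶠ e ∈ (Sym2.map (Subtype.val : U → V) '' H.edgeSet), w e := by
  rw [wtS, finsum_mem_image ((Sym2.map.injective Subtype.val_injective).injOn)]

lemma wt_patch [Fintype V] (w : Sym2 V → ℝ) (F' : SimpleGraph U) :
    wt w (Patch F U F') = (∑ᶠ e ∈ (Fout F U).edgeSet, w e) + wtS w F' := by
  rw [wt, edgeSet_patch, finsum_mem_union disj_out_in (Set.toFinite _) (Set.toFinite _),
    wtS_eq]

end Stmt4Aux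

open Stmt4Aux SimpleGraph in
/-- Let `G` be a weighted finite graph with a unique maximum weight spanning
forest `F`, and let `U` be a set of vertices inducing a subtree `T = F[U]` of `F`.  Then
`G[U]` has a unique maximum weight spanning tree, which equals `T`. -/
theorem stmt_4 {V : Type*} [Fintype V] (G : SimpleGraph V) (w : Sym2 V → ℝ)
    (F : SimpleGraph V) (hFG : F ≤ G) (hFac : F.IsAcyclic)
    (hmax : ∀ F' : SimpleGraph V, F' ≤ G → F'.IsAcyclic → wt w F' ≤ wt w F)
    (huniq : ∀ F' : SimpleGraph V, F' ≤ G → F'.IsAcyclic → wt w F' = wt w F → F' = F)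
    (U : Set V) (hU : (F.induce U).Connected) :
    F.induce U ≤ G.induce U ∧ (F.induce U).IsAcyclic ∧ (F.induce U).Connected ∧
    (∀ F' : SimpleGraph U, F' ≤ G.induce U → F'.IsAcyclic → F'.Connected →
      wtS w F' ≤ wtS w (F.induce U)) ∧
    (∀ F' : SimpleGraph U, F' ≤ G.induce U → F'.IsAcyclic → F'.Connected →
      wtS w F' = wtS w (F.induce U) → F' = F.induce U) := by
  have hTle : F.induce U ≤ G.induce U := by
    intro a b h
    simp only [comap_adj] at h ⊢
    exact hFG h
  have hTac : (F.induce U).IsAcyclic := by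
    intro v c hc
    exact hFac _ ((hc.map (f := inclHom F U) Subtype.val_injective))
  have hwF : wt w F = (∑ᶠ e ∈ (Fout F U).edgeSet, w e) + wtS w (F.induce U) := by
    conv_lhs => rw [← patch_self (F := F) (U := U)]
    exact wt_patch w _
  have key : ∀ F' : SimpleGraph U, F' ≤ G.induce U → F'.IsAcyclic →
      wtS w F' ≤ wtS w (F.induce U) := by
    intro F' hle hac
    have h1 := hmax (Patch F U F') (patch_le hFG hle) (patch_acyclic hFac hU hac)
    rw [wt_patch w F', hwF] at h1
    linarith
  refine ⟨hTle, hTac, hU, fun F' hle hac _ => key F' hle hac, ?_⟩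
  intro F' hle hac _ heq
  have h1 : wt w (Patch F U F') = wt w F := by
    rw [wt_patch w F', hwF, heq]
  have h2 : Patch F U F' = F := huniq _ (patch_le hFG hle) (patch_acyclic hFac hU hac) h1
  ext ⟨a, ha⟩ ⟨b, hb⟩
  constructor
  · intro h
    have : (Patch F U F').Adj a b := Or.inr ⟨ha, hb, h⟩
    rw [h2] at this
    simpa using this
  · intro h
    have hF : F.Adj a b := by simpa using h
    have : (Patch F U F').Adj a b := by rw [h2]; exact hF
    rcases this with ⟨-, hnb⟩ | ⟨ha', hb', hadj⟩
    · exact absurd ⟨ha, hb⟩ hnb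
    · exact hadj
end

section
/- Let T be a clique forest of a chordal graph G, let P = C_1,...,C_k be a path in T, and let V_P = C_1 ∪ ... ∪ C_k. Then P is a clique forest of the induced subgraph G[V_P], and consequently G[V_P] is an interval graph. -/
/-- A maximal clique: a clique not properly contained in any other clique. -/
def IsMaximalClique {V : Type*} (G : SimpleGraph V) (s : Set V) : Prop :=
  G.IsClique s ∧ ∀ t : Set V, G.IsClique t → s ⊆ t → s = t

/-- An interval graph: a graph admitting a representation of its vertices by nonempty closed
real intervals such that two distinct vertices are adjacent iff their intervals intersect. -/
def IsIntervalGraph {V : Type*} (G : SimpleGraph V) : Prop :=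
  ∃ I : V → Set ℝ, (∀ v, ∃ a b : ℝ, a ≤ b ∧ I v = Set.Icc a b) ∧
    ∀ u v : V, u ≠ v → (G.Adj u v ↔ (I u ∩ I v).Nonempty)

/-- A tree decomposition of a graph `G`. -/
structure TreeDecomp (V ι : Type*) (G : SimpleGraph V) where
  T : SimpleGraph ι
  acyclic : T.IsAcyclic
  bag : ι → Set V
  covers_vertex : ∀ v : V, ∃ i, v ∈ bag i
  covers_edge : ∀ ⦃u v : V⦄, G.Adj u v → ∃ i, u ∈ bag i ∧ v ∈ bag i
  subtree : ∀ v : V, (T.induce {i | v ∈ bag i}).Connected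

/-- A clique forest of `G`: a tree decomposition whose bags are exactly the maximal
cliques of `G`, without repetition. -/
structure CliqueForest (V ι : Type*) (G : SimpleGraph V) extends TreeDecomp V ι G where
  bag_maxClique : ∀ i, IsMaximalClique G (bag i)
  maxClique_mem : ∀ C : Set V, IsMaximalClique G C → ∃ i, bag i = C
  bag_injective : Function.Injective bag



open SimpleGraph

section Aux
variable {ι : Type*} {T : SimpleGraph ι}

lemma aux_glue {a x b : ι} {p : T.Walk a x} {q : T.Walk b x}
    (hp : p.IsPath) (hq : q.IsPath)
    (hint : ∀ y, y ∈ p.support → y ∈ q.support → y = x) :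
    (p.append q.reverse).IsPath := by
  rw [Walk.isPath_def, Walk.support_append]
  refine List.Nodup.append hp.support_nodup ?_ ?_
  · exact (hq.reverse.support_nodup).tail
  · intro y hy hy'
    have hyq : y ∈ q.reverse.support := List.mem_of_mem_tail hy'
    rw [Walk.support_reverse, List.mem_reverse] at hyq
    have hx : y = x := hint y hy hyq
    subst hx
    have := hq.reverse.support_nodup
    rw [q.reverse.support_eq_cons] at this
    exact (List.nodup_cons.mp this).1 hy'

lemma aux_firsthit (S : Set ι) {a b : ι} (p : T.Walk a b) :
    p.IsPath → b ∈ S → ∃ x, ∃ q : T.Walk a x, q.IsPath ∧ (∀ y ∈ q.support, y ∈ p.support) ∧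
      x ∈ S ∧ ∀ y ∈ q.support, y ∈ S → y = x := by
  induction p with
  | nil =>
    intro _ hb
    exact ⟨_, Walk.nil, by simp, by simp, hb, by simp⟩
  | @cons u v w h p ih =>
    intro hp hb
    by_cases hu : u ∈ S
    · exact ⟨u, Walk.nil, by simp, by simp, hu, by simp⟩
    · obtain ⟨x, q, hq, hsub, hxS, hfirst⟩ := ih hp.of_cons hb
      refine ⟨x, Walk.cons h q, ?_, ?_, hxS, ?_⟩
      · rw [Walk.cons_isPath_iff]
        exact ⟨hq, fun hc => ((Walk.cons_isPath_iff h p).mp hp).2 (hsub u hc)⟩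
      · intro y hy
        rw [Walk.support_cons, List.mem_cons] at hy
        rw [Walk.support_cons, List.mem_cons]
        rcases hy with rfl | hy
        · exact Or.inl rfl
        · exact Or.inr (hsub y hy)
      · intro y hy hyS
        rw [Walk.support_cons, List.mem_cons] at hy
        rcases hy with rfl | hy
        · exact absurd hyS hu
        · exact hfirst y hy hyS

lemma aux_chain {k : ℕ} (c : Fin k → ι)
    (hinj : Function.Injective c)
    (hchain : ∀ j : Fin k, ∀ hj : (j : ℕ) + 1 < k, T.Adj (c j) (c ⟨(j : ℕ) + 1, hj⟩)) :
    ∀ (d n : ℕ) (h : n + d < k), ∃ p : T.Walk (c ⟨n, by omega⟩) (c ⟨n + d, h⟩),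
      p.IsPath ∧ (∀ x ∈ p.support, ∃ m : Fin k, n ≤ (m : ℕ) ∧ (m : ℕ) ≤ n + d ∧ x = c m) ∧
      (∀ m : Fin k, n ≤ (m : ℕ) → (m : ℕ) ≤ n + d → c m ∈ p.support) := by
  intro d
  induction d with
  | zero =>
    intro n h
    refine ⟨Walk.nil, by simp, ?_, ?_⟩
    · intro x hx
      simp only [Walk.support_nil, List.mem_singleton] at hx
      exact ⟨⟨n, h⟩, Nat.le_refl n, Nat.le_refl n, hx⟩
    · intro m hm1 hm2
      have : m = ⟨n, h⟩ := Fin.ext (by simp only [Fin.val_mk]; omega)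
      simp [this]
  | succ d ih =>
    intro n h
    obtain ⟨p, hp, h1, h2⟩ := ih (n + 1) (by omega)
    have hend : c ⟨n + 1 + d, by omega⟩ = c ⟨n + (d + 1), h⟩ := by
      congr 1; exact Fin.ext (by simp only [Fin.val_mk]; omega)
    have hadj : T.Adj (c ⟨n, by omega⟩) (c ⟨n + 1, by omega⟩) :=
      hchain ⟨n, by omega⟩ (by simp only [Fin.val_mk]; omega)
    refine ⟨Walk.cons hadj (p.copy rfl hend), ?_, ?_, ?_⟩
    · rw [Walk.cons_isPath_iff]
      refine ⟨by rwa [Walk.isPath_copy], fun hc => ?_⟩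
      rw [Walk.support_copy] at hc
      obtain ⟨m, hm1, hm2, hm3⟩ := h1 _ hc
      have := congrArg Fin.val (hinj hm3)
      simp only [Fin.val_mk] at this
      omega
    · intro x hx
      rw [Walk.support_cons, List.mem_cons, Walk.support_copy] at hx
      rcases hx with rfl | hx
      · exact ⟨⟨n, by omega⟩, Nat.le_refl n, by simp only [Fin.val_mk]; omega, rfl⟩
      · obtain ⟨m, hm1, hm2, hm3⟩ := h1 _ hx
        exact ⟨m, by omega, by omega, hm3⟩
    · intro m hm1 hm2
      rw [Walk.support_cons, List.mem_cons, Walk.support_copy]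
      by_cases hmn : (m : ℕ) = n
      · left; congr 1; exact Fin.ext hmn
      · right; exact h2 m (by omega) (by omega)

end Aux

/-- Let `T` be a clique forest of a chordal graph `G`, let `P = C_1,…,C_k` be a
path in `T` (given by `c : Fin k → ι`), and let `V_P = C_1 ∪ … ∪ C_k`.  Then `P` is a clique
forest of `G[V_P]`: the bags `C_1,…,C_k` are exactly the maximal cliques of `G[V_P]`, every
edge of `G[V_P]` is covered by some `C_j`, and for every `v ∈ V_P` the bags containing `v`
form a contiguous subpath of `P`.  Consequently, `G[V_P]` is an interval graph. -/
theorem stmt_8 {V ι : Type*} (G : SimpleGraph V) (D : CliqueForest V ι G)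
    (k : ℕ) (hk : 1 ≤ k) (c : Fin k → ι) (hinj : Function.Injective c)
    (hchain : ∀ j : Fin k, ∀ hj : (j : ℕ) + 1 < k, D.T.Adj (c j) (c ⟨(j : ℕ) + 1, hj⟩))
    (VP : Set V) (hVP : VP = {v : V | ∃ j : Fin k, v ∈ D.bag (c j)}) :
    (∀ C : Set ↥VP, IsMaximalClique (G.induce VP) C ↔
      ∃ j : Fin k, Subtype.val '' C = D.bag (c j)) ∧
    (∀ u v : V, ∀ hu : u ∈ VP, ∀ hv : v ∈ VP, G.Adj u v →
      ∃ j : Fin k, u ∈ D.bag (c j) ∧ v ∈ D.bag (c j)) ∧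
    (∀ v ∈ VP, ∀ a b m : Fin k, a ≤ m → m ≤ b →
      v ∈ D.bag (c a) → v ∈ D.bag (c b) → v ∈ D.bag (c m)) ∧
    IsIntervalGraph (G.induce VP) := by
  classical
  subst hVP
  set VP : Set V := {v : V | ∃ j : Fin k, v ∈ D.bag (c j)} with hVPdef
  -- basic facts
  have hsub : ∀ j : Fin k, D.bag (c j) ⊆ VP := fun j v hv => ⟨j, hv⟩
  have huniq : ∀ {x y : ι} (p q : D.T.Walk x y), p.IsPath → q.IsPath → p = q := by
    intro x y p q hp hq
    exact congrArg Subtype.val (D.acyclic.path_unique ⟨p, hp⟩ ⟨q, hq⟩)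
  -- path in the subtree of bags containing v
  have hbagpath : ∀ (v : V) (i0 i1 : ι), v ∈ D.bag i0 → v ∈ D.bag i1 →
      ∃ p : D.T.Walk i0 i1, p.IsPath ∧ ∀ x ∈ p.support, v ∈ D.bag x := by
    intro v i0 i1 h0 h1
    obtain ⟨w⟩ := (D.subtree v).preconnected ⟨i0, h0⟩ ⟨i1, h1⟩
    let w' : D.T.Walk i0 i1 :=
      w.map (SimpleGraph.Embedding.induce {i | v ∈ D.bag i}).toHom
    refine ⟨w'.bypass, SimpleGraph.Walk.bypass_isPath w', ?_⟩
    intro x hx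
    have hx' := w'.support_bypass_subset hx
    replace hx' : x ∈ (w.map (SimpleGraph.Embedding.induce {i | v ∈ D.bag i}).toHom).support := hx'
    rw [SimpleGraph.Walk.support_map] at hx'
    obtain ⟨y, hy, rfl⟩ := List.mem_map.mp hx'
    exact y.2
  -- the chain path between c a and c b
  have hchainpath : ∀ a b : Fin k, a ≤ b → ∃ p : D.T.Walk (c a) (c b), p.IsPath ∧
      (∀ x ∈ p.support, ∃ m : Fin k, a ≤ m ∧ m ≤ b ∧ x = c m) ∧
      (∀ m : Fin k, a ≤ m → m ≤ b → c m ∈ p.support) := by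
    intro a b hab
    have hab' : (a : ℕ) ≤ (b : ℕ) := hab
    obtain ⟨p, hp, h1, h2⟩ := aux_chain c hinj hchain ((b : ℕ) - (a : ℕ)) (a : ℕ)
      (by omega)
    have e1 : (⟨(a : ℕ), by omega⟩ : Fin k) = a := Fin.ext rfl
    have e2 : (⟨(a : ℕ) + ((b : ℕ) - (a : ℕ)), by omega⟩ : Fin k) = b :=
      Fin.ext (by simp only [Fin.val_mk]; omega)
    refine ⟨p.copy (congrArg c e1) (congrArg c e2), by rwa [SimpleGraph.Walk.isPath_copy], ?_, ?_⟩
    · intro x hx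
      rw [SimpleGraph.Walk.support_copy] at hx
      obtain ⟨m, hm1, hm2, hm3⟩ := h1 x hx
      exact ⟨m, by rwa [Fin.le_def], by rw [Fin.le_def]; omega, hm3⟩
    · intro m hm1 hm2
      rw [SimpleGraph.Walk.support_copy]
      exact h2 m (by rwa [Fin.le_def] at hm1) (by rw [Fin.le_def] at hm2; omega)
  -- PART 3 : contiguity
  have hpart3 : ∀ v ∈ VP, ∀ a b m : Fin k, a ≤ m → m ≤ b →
      v ∈ D.bag (c a) → v ∈ D.bag (c b) → v ∈ D.bag (c m) := by
    intro v _ a b m ham hmb ha hb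
    obtain ⟨p, hp, hsupp⟩ := hbagpath v (c a) (c b) ha hb
    obtain ⟨q, hq, _, hmem⟩ := hchainpath a b (le_trans ham hmb)
    have hqp : q = p := huniq q p hq hp
    exact hsupp (c m) (hqp ▸ hmem m ham hmb)
  -- PART 2 : edge coverage
  have h2half : ∀ (u v : V) (j1 j2 : Fin k) (i : ι), j1 ≤ j2 → u ∈ D.bag (c j1) →
      v ∈ D.bag (c j2) → u ∈ D.bag i → v ∈ D.bag i →
      ∃ j : Fin k, u ∈ D.bag (c j) ∧ v ∈ D.bag (c j) := by
    intro u v j1 j2 i hle hj1 hj2 hui hvi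
    obtain ⟨p1, hp1, hs1⟩ := hbagpath u (c j1) i hj1 hui
    obtain ⟨p2, hp2, hs2⟩ := hbagpath v (c j2) i hj2 hvi
    obtain ⟨x, q, hq, hqsub, hxS, hfirst⟩ :=
      aux_firsthit {y | y ∈ p2.support} p1 hp1 p2.end_mem_support
    have hxp2 : x ∈ p2.support := hxS
    have hr : (p2.takeUntil x hxp2).IsPath := hp2.takeUntil hxp2
    have hglue : (q.append (p2.takeUntil x hxp2).reverse).IsPath :=
      aux_glue hq hr
        (fun y hyq hyr => hfirst y hyq (p2.support_takeUntil_subset hxp2 hyr))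
    obtain ⟨pc, hpc, hcs, _⟩ := hchainpath j1 j2 hle
    have heq : q.append (p2.takeUntil x hxp2).reverse = pc := huniq _ _ hglue hpc
    have hx_in : x ∈ pc.support := by
      rw [← heq]
      exact (SimpleGraph.Walk.mem_support_append_iff _ _).mpr (Or.inl q.end_mem_support)
    obtain ⟨m, _, _, hxm⟩ := hcs x hx_in
    subst hxm
    exact ⟨m, hs1 _ (hqsub _ q.end_mem_support), hs2 _ hxp2⟩
  have hpart2 : ∀ u v : V, u ∈ VP → v ∈ VP → G.Adj u v →
      ∃ j : Fin k, u ∈ D.bag (c j) ∧ v ∈ D.bag (c j) := by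
    intro u v hu hv hadj
    obtain ⟨j1, hj1⟩ := hu
    obtain ⟨j2, hj2⟩ := hv
    obtain ⟨i, hui, hvi⟩ := D.covers_edge hadj
    rcases le_total j1 j2 with h | h
    · exact h2half u v j1 j2 i h hj1 hj2 hui hvi
    · obtain ⟨j, hj⟩ := h2half v u j2 j1 i h hj2 hj1 hvi hui
      exact ⟨j, hj.2, hj.1⟩
  -- interval sets
  have hAne : ∀ u : V, u ∈ VP → {n : ℕ | ∃ h : n < k, u ∈ D.bag (c ⟨n, h⟩)}.Nonempty := by
    intro u hu
    obtain ⟨j, hj⟩ := hu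
    exact ⟨(j : ℕ), j.isLt, by simpa using hj⟩
  have hAbdd : ∀ u : V, BddAbove {n : ℕ | ∃ h : n < k, u ∈ D.bag (c ⟨n, h⟩)} := by
    intro u
    exact ⟨k, fun n hn => le_of_lt hn.choose⟩
  have hcontig : ∀ (u : V) (n1 n2 n : ℕ),
      n1 ∈ {n : ℕ | ∃ h : n < k, u ∈ D.bag (c ⟨n, h⟩)} →
      n2 ∈ {n : ℕ | ∃ h : n < k, u ∈ D.bag (c ⟨n, h⟩)} → n1 ≤ n → n ≤ n2 →
      n ∈ {n : ℕ | ∃ h : n < k, u ∈ D.bag (c ⟨n, h⟩)} := by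
    intro u n1 n2 n h1 h2 hn1 hn2
    obtain ⟨hk1, hb1⟩ := h1
    obtain ⟨hk2, hb2⟩ := h2
    have hnk : n < k := lt_of_le_of_lt hn2 hk2
    refine ⟨hnk, ?_⟩
    exact hpart3 u (hsub _ hb1) ⟨n1, hk1⟩ ⟨n2, hk2⟩ ⟨n, hnk⟩
      (by rw [Fin.mk_le_mk]; exact hn1) (by rw [Fin.mk_le_mk]; exact hn2) hb1 hb2
  -- every clique contained in VP lies in some bag of the chain
  have hclique_in_bag : ∀ S : Set V, (∀ u ∈ S, u ∈ VP) → G.IsClique S → S.Nonempty →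
      ∃ j : Fin k, S ⊆ D.bag (c j) := by
    intro S hSVP hScl hSne
    set A : V → Set ℕ := fun u => {n : ℕ | ∃ h : n < k, u ∈ D.bag (c ⟨n, h⟩)} with hA
    set B : Set ℕ := (fun u => sInf (A u)) '' S with hB
    have hBne : B.Nonempty := hSne.image _
    have hBbdd : BddAbove B := by
      refine ⟨k, ?_⟩
      rintro n ⟨u, hu, rfl⟩
      exact le_of_lt (Nat.sInf_mem (hAne u (hSVP u hu))).choose
    obtain ⟨u0, hu0S, hu0⟩ := Nat.sSup_mem hBne hBbdd
    have hm_mem : sSup B ∈ A u0 := hu0 ▸ Nat.sInf_mem (hAne u0 (hSVP u0 hu0S))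
    have hmk : sSup B < k := hm_mem.choose
    refine ⟨⟨sSup B, hmk⟩, ?_⟩
    intro u huS
    have hpair : ∃ n, n ∈ A u ∧ n ∈ A u0 := by
      by_cases hEq : u = u0
      · subst hEq
        exact ⟨sInf (A u), Nat.sInf_mem (hAne u (hSVP u huS)),
          Nat.sInf_mem (hAne u (hSVP u huS))⟩
      · obtain ⟨j, hju, hju0⟩ := hpart2 u u0 (hSVP u huS) (hSVP u0 hu0S)
          (hScl huS hu0S hEq)
        exact ⟨(j : ℕ), ⟨j.isLt, by simpa using hju⟩, ⟨j.isLt, by simpa using hju0⟩⟩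
    obtain ⟨n, hnu, hnu0⟩ := hpair
    have h1 : sInf (A u) ≤ sSup B := le_csSup hBbdd ⟨u, huS, rfl⟩
    have h2 : sSup B ≤ n := hu0 ▸ Nat.sInf_le hnu0
    have : sSup B ∈ A u := hcontig u (sInf (A u)) n (sSup B)
      (Nat.sInf_mem (hAne u (hSVP u huS))) hnu h1 h2
    exact this.choose_spec
  -- PART 1
  have hpart1 : ∀ C : Set ↥VP, IsMaximalClique (G.induce VP) C ↔
      ∃ j : Fin k, Subtype.val '' C = D.bag (c j) := by
    intro C
    constructor
    · rintro ⟨hCcl, hCmax⟩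
      by_cases hCne : C.Nonempty
      · have hScl : G.IsClique (Subtype.val '' C) := by
          rintro x ⟨x', hx', rfl⟩ y ⟨y', hy', rfl⟩ hne
          have hne' : x' ≠ y' := fun h => hne (congrArg Subtype.val h)
          exact hCcl hx' hy' hne'
        obtain ⟨j, hj⟩ := hclique_in_bag (Subtype.val '' C)
          (by rintro x ⟨x', _, rfl⟩; exact x'.2) hScl (hCne.image _)
        refine ⟨j, ?_⟩
        have ht : C = {x : ↥VP | (x : V) ∈ D.bag (c j)} := by
          refine hCmax _ ?_ ?_
          · intro x hx y hy hne
            have : G.Adj (x : V) (y : V) :=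
              (D.bag_maxClique (c j)).1 hx hy (fun h => hne (Subtype.ext h))
            exact this
          · intro x hx
            exact hj ⟨x, hx, rfl⟩
        rw [ht]
        ext u
        constructor
        · rintro ⟨x, hx, rfl⟩; exact hx
        · intro hu; exact ⟨⟨u, hsub j hu⟩, hu, rfl⟩
      · rw [Set.not_nonempty_iff_eq_empty] at hCne
        subst hCne
        have hVPempty : ∀ x : V, x ∉ VP := by
          intro x hx
          have ht := hCmax {⟨x, hx⟩} (Set.pairwise_singleton _ _) (Set.empty_subset _)
          exact (Set.singleton_ne_empty _) ht.symm
        refine ⟨⟨0, hk⟩, ?_⟩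
        rw [Set.image_empty]
        symm
        rw [Set.eq_empty_iff_forall_notMem]
        intro u hu
        exact hVPempty u (hsub _ hu)
    · rintro ⟨j, hj⟩
      constructor
      · intro x hx y hy hne
        have hxb : (x : V) ∈ D.bag (c j) := hj ▸ ⟨x, hx, rfl⟩
        have hyb : (y : V) ∈ D.bag (c j) := hj ▸ ⟨y, hy, rfl⟩
        have : G.Adj (x : V) (y : V) :=
          (D.bag_maxClique (c j)).1 hxb hyb (fun h => hne (Subtype.ext h))
        exact this
      · intro t ht hCt
        have htcl : G.IsClique (Subtype.val '' t) := by
          rintro x ⟨x', hx', rfl⟩ y ⟨y', hy', rfl⟩ hne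
          exact ht hx' hy' (fun h => hne (congrArg Subtype.val h))
        have hbag := (D.bag_maxClique (c j)).2 _ htcl
          (by rw [← hj]; exact Set.image_mono hCt)
        have himg : Subtype.val '' C = Subtype.val '' t := by rw [hj, hbag]
        exact Set.image_injective.mpr Subtype.val_injective himg
  refine ⟨hpart1, hpart2, hpart3, ?_⟩
  -- PART 4 : interval graph
  set A : V → Set ℕ := fun u => {n : ℕ | ∃ h : n < k, u ∈ D.bag (c ⟨n, h⟩)} with hA
  refine ⟨fun v => Set.Icc ((sInf (A v) : ℕ) : ℝ) ((sSup (A v) : ℕ) : ℝ), ?_, ?_⟩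
  · intro v
    refine ⟨_, _, ?_, rfl⟩
    exact_mod_cast Nat.sInf_le (Nat.sSup_mem (hAne _ v.2) (hAbdd _))
  · intro u v hne
    constructor
    · intro hadj
      have hadj' : G.Adj (u : V) (v : V) := hadj
      obtain ⟨j, hju, hjv⟩ := hpart2 _ _ u.2 v.2 hadj'
      refine ⟨((j : ℕ) : ℝ), ?_, ?_⟩ <;>
        refine ⟨?_, ?_⟩ <;> rw [Nat.cast_le]
      · exact Nat.sInf_le ⟨j.isLt, by simpa using hju⟩
      · exact le_csSup (hAbdd _) ⟨j.isLt, by simpa using hju⟩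
      · exact Nat.sInf_le ⟨j.isLt, by simpa using hjv⟩
      · exact le_csSup (hAbdd _) ⟨j.isLt, by simpa using hjv⟩
    · rintro ⟨x, ⟨hu1, hu2⟩, ⟨hv1, hv2⟩⟩
      have huu : sInf (A u) ≤ sSup (A v) := by
        rw [← Nat.cast_le (α := ℝ)]
        exact le_trans hu1 hv2
      have hvv : sInf (A v) ≤ sSup (A u) := by
        rw [← Nat.cast_le (α := ℝ)]
        exact le_trans hv1 hu2
      have hIu : sInf (A u) ∈ A u := Nat.sInf_mem (hAne _ u.2)
      have hSu : sSup (A u) ∈ A u := Nat.sSup_mem (hAne _ u.2) (hAbdd _)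
      have hIv : sInf (A v) ∈ A v := Nat.sInf_mem (hAne _ v.2)
      have hSv : sSup (A v) ∈ A v := Nat.sSup_mem (hAne _ v.2) (hAbdd _)
      set m : ℕ := max (sInf (A u)) (sInf (A v)) with hm
      have hmu : m ∈ A u := hcontig _ _ _ m hIu hSu (le_max_left _ _)
        (max_le (Nat.sInf_le hSu) hvv)
      have hmv : m ∈ A v := hcontig _ _ _ m hIv hSv (le_max_right _ _)
        (max_le huu (Nat.sInf_le hSv))
      have hadj : G.Adj (u : V) (v : V) :=
        (D.bag_maxClique (c ⟨m, hmu.choose⟩)).1 hmu.choose_spec hmv.choose_spec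
          (fun h => hne (Subtype.ext h))
      exact hadj
end

section
/- For every real k ≥ 4 and real β ≥ 2(k−3) with β > 0, the quantity (β(1 + 4/(k−3)) + 2) / (β(1 + 2/(k−3)) + 1) is at most 1 + 2.5/(k − 0.5). -/
/-- For every real `k ≥ 4` and real `β ≥ 2(k−3)` with `β > 0`,
`(β(1 + 4/(k−3)) + 2) / (β(1 + 2/(k−3)) + 1) ≤ 1 + 2.5/(k − 0.5)`. -/
theorem stmt_12 (k β : ℝ) (hk : 4 ≤ k) (hβ2 : 2 * (k - 3) ≤ β) (hβ : 0 < β) :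
    (β * (1 + 4 / (k - 3)) + 2) / (β * (1 + 2 / (k - 3)) + 1) ≤ 1 + 2.5 / (k - 0.5) := by
  have h3 : (0:ℝ) < k - 3 := by linarith
  have h5 : (0:ℝ) < k - 0.5 := by linarith
  have hden : 0 < β * (1 + 2 / (k - 3)) + 1 := by positivity
  rw [div_le_iff₀ hden]
  set x := (k - 3)⁻¹ with hx
  set y := (k - 0.5)⁻¹ with hy
  have px : 0 < x := inv_pos.mpr h3
  have py : 0 < y := inv_pos.mpr h5
  have i3 : x * (k - 3) = 1 := inv_mul_cancel₀ h3.ne'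
  have i5 : y * (k - 0.5) = 1 := inv_mul_cancel₀ h5.ne'
  have h4 : 4 / (k - 3) = 4 * x := by rw [hx]; ring
  have h2 : 2 / (k - 3) = 2 * x := by rw [hx]; ring
  have h25 : (2.5 : ℝ) / (k - 0.5) = 2.5 * y := by rw [hy]; ring
  -- relation: x - y = 2.5 * x * y
  have hrel : x - y = 2.5 * (x * y) := by nlinarith [mul_pos px py]
  -- (k-3)*y = 1 - 2.5*y
  have hky : (k - 3) * y = 1 - 2.5 * y := by nlinarith
  have hβy : 2 * ((k - 3) * y) ≤ β * y := by
    have := mul_le_mul_of_nonneg_right hβ2 py.le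
    linarith [this]
  rw [h4, h2, h25]
  nlinarith [mul_pos px py, hβy, hrel, mul_pos py hβ]
end

section
/- Let p ∈ [0, 1/2 + c/n] for a constant c, r ≥ 0 an integer, and suppose p(2r+3) ≤ r + 5/4 + c'/n for a constant c'. If (1+ε)·((2r+2) + (n − 2r − 2)·p) ≥ ⌈n/2⌉ for all sufficiently large n, then r ≥ Ω(1/ε); concretely, p ≤ (r + 5/4 + c'/n)/(2r+3) implies (1+ε)(1/2 − 1/(8r+12)) ≥ 1/2 − o(1), hence 1/(8r+12) ≤ ε/(2(1+ε)) + o(1). -/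
/-- arithmetic skeleton of the Ω(1/ε) lower bound for MIS on paths:
if `p ∈ [0, 1/2 + c/n]`, `p(2r+3) ≤ r + 5/4 + c'/n` and the approximation guarantee
`⌈n/2⌉ ≤ (1+ε)((2r+2) + (n−2r−2)p)` holds, then
`1/(8r+12) ≤ ε/(2(1+ε)) + o(1)`, the `o(1)` term being `((2r+2) + c'/(2r+3))/n`. -/
theorem stmt_17 (n ε c c' p : ℝ) (r : ℕ)
    (hn : 0 < n) (hε : 0 < ε) (hc : 0 ≤ c) (hc' : 0 ≤ c')
    (hp0 : 0 ≤ p) (hp1 : p ≤ 1 / 2 + c / n)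
    (hwin : p * (2 * r + 3) ≤ r + 5 / 4 + c' / n)
    (happrox : n / 2 ≤ (1 + ε) * ((2 * r + 2) + (n - 2 * r - 2) * p)) :
    1 / (8 * r + 12) ≤ ε / (2 * (1 + ε)) + ((2 * r + 2) + c' / (2 * r + 3)) / n := by
  have hr : (0:ℝ) ≤ (r:ℝ) := Nat.cast_nonneg r
  have hD : (0:ℝ) < 2 * (r:ℝ) + 3 := by linarith
  have hs : (0:ℝ) < 1 + ε := by linarith
  -- clear the 1/n denominator in hwin
  have hwin' : p * (2 * r + 3) * n ≤ ((r:ℝ) + 5 / 4) * n + c' := by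
    have := mul_le_mul_of_nonneg_right hwin hn.le
    have hc'n : c' / n * n = c' := div_mul_cancel₀ c' hn.ne'
    nlinarith [this]
  -- key polynomial inequality
  have key : (1 + ε) * n ≤ 2 * ε * (2 * r + 3) * n
      + 4 * (1 + ε) * (2 * r + 2) * (2 * r + 3) + 4 * (1 + ε) * c' := by
    rcases le_or_gt (2 * (r:ℝ) + 2) n with h | h
    · -- n ≥ 2r+2 : use happrox and hwin'
      have h1 : (0:ℝ) ≤ n - 2 * r - 2 := by linarith
      have h2 := mul_le_mul_of_nonneg_right happrox hn.le
      nlinarith [mul_le_mul_of_nonneg_left hwin' (mul_nonneg hs.le h1),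
        mul_nonneg (mul_nonneg hs.le hc') h1, mul_nonneg hs.le hc',
        mul_nonneg (mul_nonneg hs.le hr) hr, mul_nonneg hs.le hr,
        mul_nonneg hε.le (mul_nonneg hn.le hn.le)]
    · -- n < 2r+2 : trivial
      nlinarith [mul_nonneg hs.le hc', mul_nonneg hε.le hD.le,
        mul_nonneg (mul_nonneg hε.le hD.le) hn.le, mul_nonneg hs.le hr,
        mul_nonneg (mul_nonneg hs.le hr) hr]
  -- convert goal to a single fraction comparison
  have e1 : (2 * (r:ℝ) + 2) + c' / (2 * r + 3)
      = ((2 * r + 2) * (2 * r + 3) + c') / (2 * r + 3) := by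
    field_simp
  rw [e1, div_div, div_add_div _ _ (by positivity : (2 * (1 + ε)) ≠ 0)
      (by positivity : ((2 * (r:ℝ) + 3) * n) ≠ 0),
    div_le_div_iff₀ (by positivity) (by positivity)]
  nlinarith [mul_le_mul_of_nonneg_left key hD.le]
end
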